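/- Suppose h: ℝ^d → ℝ is convex with minimizer x*, and for the current iterate x with h(x) ≤ h(x^(0)) we have ‖Ax − Ax*‖_∞ ≤ R. Suppose Δ̃ satisfies ‖AΔ̃‖_∞ ≤ 1/C and res_x(Δ̃) ≥ κ·max_{‖AΔ‖_∞ ≤ 1/C} res_x(Δ), where res_x(Δ) = ∇f(x)ᵀ(AΔ) − (1/e)(AΔ)ᵀ∇²f(x)(AΔ) and h(x) = Σᵢ f((Ax−b)ᵢ) with f C-QSC. Then h(x − Δ̃/e²) − h(x*) ≤ (1 − κ/(e²CR))·(h(x) − h(x*)). -/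

import Mathlib

lemma gronwall_aux (C : ℝ) (g g' : ℝ → ℝ)
    (hg : ∀ t, HasDerivAt g (g' t) t)
    (hb : ∀ t, |g' t| ≤ C * g t) :
    ∀ a b : ℝ, g b ≤ g a * Real.exp (C * |b - a|) := by
  have hdiff : Differentiable ℝ g := fun t => (hg t).differentiableAt
  -- φ(s) = g s * exp (-(C*s)) is antitone
  have hφ : Antitone (fun s => g s * Real.exp (-(C * s))) := by
    apply antitone_of_deriv_nonpos
    · exact hdiff.mul (Real.differentiable_exp.comp (differentiable_const _ |>.mul differentiable_id).neg)
    · intro s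
      have h1 : HasDerivAt (fun s : ℝ => Real.exp (-(C * s))) (Real.exp (-(C * s)) * (-C)) s := by
        have := ((hasDerivAt_id s).const_mul C).neg
        simpa using this.exp
      have h2 : HasDerivAt (fun s => g s * Real.exp (-(C * s)))
          (g' s * Real.exp (-(C * s)) + g s * (Real.exp (-(C * s)) * (-C))) s :=
        (hg s).mul h1
      rw [h2.deriv]
      have h3 : g' s ≤ C * g s := (abs_le.mp (hb s)).2
      nlinarith [Real.exp_pos (-(C * s))]
  -- ψ(s) = g s * exp (C*s) is monotone
  have hψ : Monotone (fun s => g s * Real.exp (C * s)) := by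
    apply monotone_of_deriv_nonneg
    · exact hdiff.mul (Real.differentiable_exp.comp (differentiable_const _ |>.mul differentiable_id))
    · intro s
      have h1 : HasDerivAt (fun s : ℝ => Real.exp (C * s)) (Real.exp (C * s) * C) s := by
        have := (hasDerivAt_id s).const_mul C
        simpa using this.exp
      have h2 : HasDerivAt (fun s => g s * Real.exp (C * s))
          (g' s * Real.exp (C * s) + g s * (Real.exp (C * s) * C)) s := (hg s).mul h1
      rw [h2.deriv]
      have h3 : -(C * g s) ≤ g' s := (abs_le.mp (hb s)).1
      nlinarith [Real.exp_pos (C * s)]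
  intro a b
  rcases le_total a b with hab | hab
  · have h0 := hφ hab
    simp only at h0
    rw [abs_of_nonneg (by linarith : (0:ℝ) ≤ b - a)]
    calc g b = g b * Real.exp (-(C*b)) * Real.exp (C*b) := by
              rw [mul_assoc, ← Real.exp_add]; simp
      _ ≤ g a * Real.exp (-(C*a)) * Real.exp (C*b) :=
          mul_le_mul_of_nonneg_right h0 (Real.exp_pos _).le
      _ = g a * Real.exp (C*(b-a)) := by rw [mul_assoc, ← Real.exp_add]; ring_nf
  · have h0 := hψ hab
    simp only at h0
    rw [abs_of_nonpos (by linarith : b - a ≤ (0:ℝ))]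
    calc g b = g b * Real.exp (C*b) * Real.exp (-(C*b)) := by
              rw [mul_assoc, ← Real.exp_add]; simp
      _ ≤ g a * Real.exp (C*a) * Real.exp (-(C*b)) :=
          mul_le_mul_of_nonneg_right h0 (Real.exp_pos _).le
      _ = g a * Real.exp (C * -(b-a)) := by rw [mul_assoc, ← Real.exp_add]; ring_nf

lemma taylor_lower (C : ℝ) (hC : 0 < C) (f f1 g : ℝ → ℝ)
    (hf1 : ∀ t, HasDerivAt f (f1 t) t)
    (hg : ∀ t, HasDerivAt f1 (g t) t)
    (hgron : ∀ a b, g b ≤ g a * Real.exp (C * |b - a|))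
    (hg0 : ∀ t, 0 ≤ g t)
    (t v : ℝ) (hv : |v| ≤ 1 / C) :
    f t + f1 t * v + g t * v ^ 2 * (Real.exp 1)⁻¹ ≤ f (t + v) := by
  have hCv : C * |v| ≤ 1 := by
    rw [← le_div_iff₀' hC]; exact hv
  set Φ : ℝ → ℝ := fun τ => f (t + τ * v) - f t - f1 t * (τ * v)
      - g t * v ^ 2 * (Real.exp (-τ) + τ - 1) with hΦ
  set Ψ : ℝ → ℝ := fun τ => v * f1 (t + τ * v) - f1 t * v
      - g t * v ^ 2 * (1 - Real.exp (-τ)) with hΨ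
  have hin : ∀ τ : ℝ, HasDerivAt (fun τ : ℝ => t + τ * v) v τ := fun τ => by
    simpa using ((hasDerivAt_id τ).mul_const v).const_add t
  have hΦd : ∀ τ, HasDerivAt Φ (Ψ τ) τ := by
    intro τ
    have h1 : HasDerivAt (fun τ : ℝ => f (t + τ * v)) (f1 (t + τ * v) * v) τ :=
      (hf1 (t + τ * v)).comp τ (hin τ)
    have h2 : HasDerivAt (fun τ : ℝ => Real.exp (-τ) + τ - 1) (-Real.exp (-τ) + 1) τ := by
      have := (((hasDerivAt_neg τ).exp).add (hasDerivAt_id τ)).sub_const 1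
      simpa [mul_comm] using this
    have h3 : HasDerivAt (fun τ : ℝ => f1 t * (τ * v)) (f1 t * v) τ := by
      simpa using ((hasDerivAt_id τ).mul_const v).const_mul (f1 t)
    have := ((h1.sub_const (f t)).sub h3).sub (h2.const_mul (g t * v ^ 2))
    exact this.congr_deriv (by simp only [hΨ]; ring)
  have hΨd : ∀ τ, HasDerivAt Ψ (v ^ 2 * g (t + τ * v) - g t * v ^ 2 * Real.exp (-τ)) τ := by
    intro τ
    have h5 : HasDerivAt (fun τ : ℝ => v * f1 (t + τ * v)) (v * (g (t + τ * v) * v)) τ :=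
      ((hg (t + τ * v)).comp τ (hin τ)).const_mul v
    have h6 : HasDerivAt (fun τ : ℝ => 1 - Real.exp (-τ)) (Real.exp (-τ)) τ := by
      have := ((hasDerivAt_neg τ).exp).const_sub 1
      simpa using this
    have := (h5.sub_const (f1 t * v)).sub (h6.const_mul (g t * v ^ 2))
    exact this.congr_deriv (by ring)
  have hΨnn : ∀ τ ∈ Set.Icc (0:ℝ) 1, 0 ≤ v ^ 2 * g (t + τ * v) - g t * v ^ 2 * Real.exp (-τ) := by
    intro τ hτ
    obtain ⟨hτ0, hτ1⟩ := hτ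
    have habs : |t - (t + τ * v)| = τ * |v| := by
      rw [abs_sub_comm]
      simp [abs_mul, abs_of_nonneg hτ0]
    have h7 : g t ≤ g (t + τ * v) * Real.exp (C * (τ * |v|)) := by
      have := hgron (t + τ * v) t
      rwa [habs] at this
    have h8 : Real.exp (C * (τ * |v|)) * Real.exp (-τ) ≤ 1 := by
      rw [← Real.exp_add, ← Real.exp_zero]
      apply Real.exp_le_exp.mpr
      nlinarith [abs_nonneg v]
    have h9 : g t * Real.exp (-τ) ≤ g (t + τ * v) := by
      calc g t * Real.exp (-τ) ≤ g (t + τ * v) * Real.exp (C * (τ * |v|)) * Real.exp (-τ) :=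
            mul_le_mul_of_nonneg_right h7 (Real.exp_pos _).le
        _ = g (t + τ * v) * (Real.exp (C * (τ * |v|)) * Real.exp (-τ)) := by ring
        _ ≤ g (t + τ * v) * 1 := mul_le_mul_of_nonneg_left h8 (hg0 _)
        _ = g (t + τ * v) := mul_one _
    nlinarith [sq_nonneg v]
  have hΨ0 : Ψ 0 = 0 := by simp [hΨ]; ring
  have hΨmono : MonotoneOn Ψ (Set.Icc (0:ℝ) 1) := by
    apply monotoneOn_of_deriv_nonneg (convex_Icc 0 1)
    · exact (Differentiable.continuous (fun τ => (hΨd τ).differentiableAt)).continuousOn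
    · exact fun τ _ => ((hΨd τ).differentiableAt).differentiableWithinAt
    · intro τ hτ
      rw [(hΨd τ).deriv]
      rw [interior_Icc] at hτ
      exact hΨnn τ ⟨hτ.1.le, hτ.2.le⟩
  have hΦmono : MonotoneOn Φ (Set.Icc (0:ℝ) 1) := by
    apply monotoneOn_of_deriv_nonneg (convex_Icc 0 1)
    · exact (Differentiable.continuous (fun τ => (hΦd τ).differentiableAt)).continuousOn
    · exact fun τ _ => ((hΦd τ).differentiableAt).differentiableWithinAt
    · intro τ hτ
      rw [(hΦd τ).deriv]
      rw [interior_Icc] at hτ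
      have := hΨmono (Set.left_mem_Icc.mpr zero_le_one) ⟨hτ.1.le, hτ.2.le⟩ hτ.1.le
      linarith [hΨ0 ▸ this]
  have hΦ01 : Φ 0 ≤ Φ 1 :=
    hΦmono (Set.left_mem_Icc.mpr zero_le_one) (Set.right_mem_Icc.mpr zero_le_one) zero_le_one
  have hΦ0 : Φ 0 = 0 := by simp [hΦ]
  have hΦ1 : Φ 1 = f (t + v) - f t - f1 t * v - g t * v ^ 2 * (Real.exp 1)⁻¹ := by
    simp [hΦ, Real.exp_neg]
  rw [hΦ0, hΦ1] at hΦ01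
  linarith

lemma taylor_upper (C : ℝ) (hC : 0 < C) (f f1 g : ℝ → ℝ)
    (hf1 : ∀ t, HasDerivAt f (f1 t) t)
    (hg : ∀ t, HasDerivAt f1 (g t) t)
    (hgron : ∀ a b, g b ≤ g a * Real.exp (C * |b - a|))
    (hg0 : ∀ t, 0 ≤ g t)
    (t v : ℝ) (hv : |v| ≤ 1 / C) :
    f (t + v) ≤ f t + f1 t * v + g t * v ^ 2 * (Real.exp 1 / 2) := by
  have hCv : C * |v| ≤ 1 := by
    rw [← le_div_iff₀' hC]; exact hv
  set Φ : ℝ → ℝ := fun τ => f (t + τ * v) - f t - f1 t * (τ * v)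
      - g t * v ^ 2 * Real.exp 1 * (τ ^ 2 / 2) with hΦ
  set Ψ : ℝ → ℝ := fun τ => v * f1 (t + τ * v) - f1 t * v
      - g t * v ^ 2 * Real.exp 1 * τ with hΨ
  have hin : ∀ τ : ℝ, HasDerivAt (fun τ : ℝ => t + τ * v) v τ := fun τ => by
    simpa using ((hasDerivAt_id τ).mul_const v).const_add t
  have hΦd : ∀ τ, HasDerivAt Φ (Ψ τ) τ := by
    intro τ
    have h1 : HasDerivAt (fun τ : ℝ => f (t + τ * v)) (f1 (t + τ * v) * v) τ :=
      (hf1 (t + τ * v)).comp τ (hin τ)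
    have h2 : HasDerivAt (fun τ : ℝ => τ ^ 2 / 2) τ τ := by
      have := ((hasDerivAt_pow 2 τ)).div_const 2
      simpa using this
    have h3 : HasDerivAt (fun τ : ℝ => f1 t * (τ * v)) (f1 t * v) τ := by
      simpa using ((hasDerivAt_id τ).mul_const v).const_mul (f1 t)
    have := ((h1.sub_const (f t)).sub h3).sub (h2.const_mul (g t * v ^ 2 * Real.exp 1))
    exact this.congr_deriv (by simp only [hΨ]; ring)
  have hΨd : ∀ τ, HasDerivAt Ψ (v ^ 2 * g (t + τ * v) - g t * v ^ 2 * Real.exp 1) τ := by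
    intro τ
    have h5 : HasDerivAt (fun τ : ℝ => v * f1 (t + τ * v)) (v * (g (t + τ * v) * v)) τ :=
      ((hg (t + τ * v)).comp τ (hin τ)).const_mul v
    have h6 : HasDerivAt (fun τ : ℝ => g t * v ^ 2 * Real.exp 1 * τ) (g t * v ^ 2 * Real.exp 1) τ := by
      simpa using (hasDerivAt_id τ).const_mul (g t * v ^ 2 * Real.exp 1)
    have := (h5.sub_const (f1 t * v)).sub h6
    exact this.congr_deriv (by ring)
  have hΨnp : ∀ τ ∈ Set.Icc (0:ℝ) 1, v ^ 2 * g (t + τ * v) - g t * v ^ 2 * Real.exp 1 ≤ 0 := by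
    intro τ hτ
    obtain ⟨hτ0, hτ1⟩ := hτ
    have habs : |t + τ * v - t| = τ * |v| := by
      simp [abs_mul, abs_of_nonneg hτ0]
    have h7 : g (t + τ * v) ≤ g t * Real.exp (C * (τ * |v|)) := by
      have := hgron t (t + τ * v)
      rwa [habs] at this
    have h8 : Real.exp (C * (τ * |v|)) ≤ Real.exp 1 := by
      apply Real.exp_le_exp.mpr
      nlinarith [abs_nonneg v]
    have h9 : g (t + τ * v) ≤ g t * Real.exp 1 :=
      h7.trans (mul_le_mul_of_nonneg_left h8 (hg0 _))
    nlinarith [sq_nonneg v]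
  have hΨ0 : Ψ 0 = 0 := by simp [hΨ]; ring
  have hΨanti : AntitoneOn Ψ (Set.Icc (0:ℝ) 1) := by
    apply antitoneOn_of_deriv_nonpos (convex_Icc 0 1)
    · exact (Differentiable.continuous (fun τ => (hΨd τ).differentiableAt)).continuousOn
    · exact fun τ _ => ((hΨd τ).differentiableAt).differentiableWithinAt
    · intro τ hτ
      rw [(hΨd τ).deriv]
      rw [interior_Icc] at hτ
      exact hΨnp τ ⟨hτ.1.le, hτ.2.le⟩
  have hΦanti : AntitoneOn Φ (Set.Icc (0:ℝ) 1) := by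
    apply antitoneOn_of_deriv_nonpos (convex_Icc 0 1)
    · exact (Differentiable.continuous (fun τ => (hΦd τ).differentiableAt)).continuousOn
    · exact fun τ _ => ((hΦd τ).differentiableAt).differentiableWithinAt
    · intro τ hτ
      rw [(hΦd τ).deriv]
      rw [interior_Icc] at hτ
      have := hΨanti (Set.left_mem_Icc.mpr zero_le_one) ⟨hτ.1.le, hτ.2.le⟩ hτ.1.le
      linarith [hΨ0 ▸ this]
  have hΦ01 : Φ 1 ≤ Φ 0 :=
    hΦanti (Set.left_mem_Icc.mpr zero_le_one) (Set.right_mem_Icc.mpr zero_le_one) zero_le_one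
  have hΦ0 : Φ 0 = 0 := by simp [hΦ]
  have hΦ1 : Φ 1 = f (t + v) - f t - f1 t * v - g t * v ^ 2 * (Real.exp 1 / 2) := by
    simp [hΦ]; ring
  rw [hΦ0, hΦ1] at hΦ01
  linarith

open Matrix

theorem qsc_progress {n d : ℕ} (C R κ : ℝ) (hC : 0 < C) (hκ : 0 < κ) (hκ1 : κ ≤ 1)
    (hCR : 1 / C ≤ R)
    (f : ℝ → ℝ) (hf : ContDiff ℝ 3 f) (hconv : ConvexOn ℝ Set.univ f)
    (hqsc : ∀ t : ℝ, |iteratedDeriv 3 f t| ≤ C * iteratedDeriv 2 f t)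
    (A : Matrix (Fin n) (Fin d) ℝ) (b : Fin n → ℝ)
    (h : (Fin d → ℝ) → ℝ)
    (hh : ∀ z, h z = ∑ i, f ((A.mulVec z - b) i))
    (hconvh : ConvexOn ℝ Set.univ h)
    (res : (Fin d → ℝ) → (Fin d → ℝ) → ℝ)
    (hres : ∀ x Δ : Fin d → ℝ, res x Δ =
      (∑ i, deriv f ((A.mulVec x - b) i) * A.mulVec Δ i) -
        (Real.exp 1)⁻¹ * ∑ i, iteratedDeriv 2 f ((A.mulVec x - b) i) * (A.mulVec Δ i) ^ 2)
    (xstar : Fin d → ℝ) (hmin : ∀ y : Fin d → ℝ, h xstar ≤ h y)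
    (x0 x : Fin d → ℝ) (hlevel : h x ≤ h x0)
    (hdiam : ‖A.mulVec x - A.mulVec xstar‖ ≤ R)
    (Δt : Fin d → ℝ) (hΔt : ‖A.mulVec Δt‖ ≤ 1 / C)
    (happrox : ∀ Δ : Fin d → ℝ, ‖A.mulVec Δ‖ ≤ 1 / C → κ * res x Δ ≤ res x Δt) :
    h (x - (Real.exp 1 ^ 2)⁻¹ • Δt) - h xstar ≤
      (1 - κ / (Real.exp 1 ^ 2 * C * R)) * (h x - h xstar) := by
  have he : (0:ℝ) < Real.exp 1 := Real.exp_pos 1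
  have he2 : (2:ℝ) ≤ Real.exp 1 := by
    have := Real.add_one_le_exp 1; linarith
  set E : ℝ := Real.exp 1 with hE
  -- derivatives
  set f1 : ℝ → ℝ := deriv f with hf1def
  set g : ℝ → ℝ := iteratedDeriv 2 f with hgdef
  have hd1 : ∀ t, HasDerivAt f (f1 t) t := fun t =>
    ((hf.differentiable (by norm_num)) t).hasDerivAt
  have hg_eq : g = deriv f1 := by
    rw [hgdef, hf1def, show (2:ℕ) = 1 + 1 from rfl, iteratedDeriv_succ, iteratedDeriv_one]
  have hdf1 : Differentiable ℝ f1 := by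
    have := hf.differentiable_iteratedDeriv 1 (by norm_num)
    rwa [iteratedDeriv_one] at this
  have hd2 : ∀ t, HasDerivAt f1 (g t) t := fun t => by
    rw [hg_eq]; exact (hdf1 t).hasDerivAt
  have hdg : Differentiable ℝ g := hf.differentiable_iteratedDeriv 2 (by norm_num)
  have hd3 : ∀ t, HasDerivAt g (iteratedDeriv 3 f t) t := fun t => by
    rw [show iteratedDeriv 3 f = deriv g from by rw [hgdef, show (3:ℕ) = 2 + 1 from rfl, iteratedDeriv_succ]]
    exact (hdg t).hasDerivAt
  have hg0 : ∀ t, 0 ≤ g t := by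
    intro t
    have h1 := (abs_nonneg (iteratedDeriv 3 f t)).trans (hqsc t)
    nlinarith
  have hgron : ∀ a b : ℝ, g b ≤ g a * Real.exp (C * |b - a|) :=
    gronwall_aux C g (iteratedDeriv 3 f) hd3 hqsc
  -- basic positivity
  have hR : 0 < R := lt_of_lt_of_le (by positivity) hCR
  have hCR1 : 1 ≤ C * R := by
    rw [div_le_iff₀ hC] at hCR; linarith
  set c : ℝ := (E ^ 2)⁻¹ with hcdef
  have hc0 : 0 < c := by positivity
  have hc1 : c ≤ 1 := by
    rw [hcdef]
    rw [inv_le_one_iff₀]; right; nlinarith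
  set θ : ℝ := 1 / (C * R) with hθdef
  have hθ0 : 0 < θ := by positivity
  have hθ1 : θ ≤ 1 := by
    rw [hθdef, div_le_one (by positivity)]; exact hCR1
  set y : Fin n → ℝ := A.mulVec x - b with hy
  set wt : Fin n → ℝ := A.mulVec Δt with hwt
  -- STEP BOUND
  have hstep_entry : ∀ i, (A.mulVec (x - c • Δt) - b) i = y i + (-(c * wt i)) := by
    intro i
    rw [Matrix.mulVec_sub, Matrix.mulVec_smul]
    simp [hy, hwt]
    ring
  set S1 : ℝ := ∑ i, f1 (y i) * wt i with hS1
  set S2 : ℝ := ∑ i, g (y i) * wt i ^ 2 with hS2def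
  have hS2 : 0 ≤ S2 := Finset.sum_nonneg fun i _ => mul_nonneg (hg0 _) (sq_nonneg _)
  have hres_t : res x Δt = S1 - E⁻¹ * S2 := hres x Δt
  have key1 : h (x - c • Δt) - h x ≤ -(c * res x Δt) := by
    have hsum : h (x - c • Δt) ≤ ∑ i, (f (y i) + f1 (y i) * (-(c * wt i)) + g (y i) * (-(c * wt i)) ^ 2 * (E / 2)) := by
      rw [hh]
      apply Finset.sum_le_sum
      intro i _
      rw [hstep_entry i]
      apply taylor_upper C hC f f1 g hd1 hd2 hgron hg0
      have h1 : |wt i| ≤ 1 / C := (norm_le_pi_norm wt i).trans hΔt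
      have h2 : |(-(c * wt i))| = c * |wt i| := by
        rw [abs_neg, abs_mul, abs_of_pos hc0]
      rw [h2]
      calc c * |wt i| ≤ 1 * (1/C) := by
            apply mul_le_mul hc1 h1 (abs_nonneg _) zero_le_one
        _ = 1 / C := one_mul _
    have hsum2 : ∑ i, (f (y i) + f1 (y i) * (-(c * wt i)) + g (y i) * (-(c * wt i)) ^ 2 * (E / 2))
        = h x + (-c) * S1 + (c ^ 2 * (E / 2)) * S2 := by
      rw [hh, hS1, hS2def, Finset.sum_add_distrib, Finset.sum_add_distrib,
        Finset.mul_sum, Finset.mul_sum]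
      congr 1
      · congr 1
        apply Finset.sum_congr rfl; intro i _; ring
      · apply Finset.sum_congr rfl; intro i _; ring
    have hcc : c ^ 2 * (E / 2) * S2 ≤ c * E⁻¹ * S2 := by
      apply mul_le_mul_of_nonneg_right _ hS2
      have hcE : c * E = E⁻¹ := by
        rw [hcdef, pow_two, mul_inv, mul_assoc, inv_mul_cancel₀ (ne_of_gt he), mul_one]
      calc c ^ 2 * (E / 2) = c * (c * E) / 2 := by ring
        _ = c * E⁻¹ / 2 := by rw [hcE]
        _ ≤ c * E⁻¹ := by
            have : 0 ≤ c * E⁻¹ := by positivity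
            linarith
    rw [hres_t]
    have := hsum.trans_eq hsum2
    nlinarith
  -- HAT BOUND
  set Δh : Fin d → ℝ := θ • (x - xstar) with hΔh
  set wh : Fin n → ℝ := fun i => θ * (A.mulVec x - A.mulVec xstar) i with hwh
  have hwhA : A.mulVec Δh = wh := by
    funext i
    rw [hΔh, Matrix.mulVec_smul, Matrix.mulVec_sub]
    simp [hwh]
  have hwh_i : ∀ i, |wh i| ≤ 1 / C := by
    intro i
    rw [hwh]
    have h1 : |(A.mulVec x - A.mulVec xstar) i| ≤ R :=
      (norm_le_pi_norm (A.mulVec x - A.mulVec xstar) i).trans hdiam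
    have : |θ * (A.mulVec x - A.mulVec xstar) i| = θ * |(A.mulVec x - A.mulVec xstar) i| := by
      rw [abs_mul, abs_of_pos hθ0]
    rw [this]
    calc θ * |(A.mulVec x - A.mulVec xstar) i| ≤ θ * R :=
          mul_le_mul_of_nonneg_left h1 hθ0.le
      _ = 1 / C := by rw [hθdef]; field_simp
  have hwh_norm : ‖A.mulVec Δh‖ ≤ 1 / C := by
    rw [hwhA]
    apply (pi_norm_le_iff_of_nonneg (by positivity)).mpr
    exact hwh_i
  have hhat_entry : ∀ i, (A.mulVec (x - Δh) - b) i = y i + (-(wh i)) := by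
    intro i
    rw [Matrix.mulVec_sub, hwhA]
    simp [hy]
    ring
  have hres_h : res x Δh = (∑ i, f1 (y i) * wh i) - E⁻¹ * ∑ i, g (y i) * wh i ^ 2 := by
    rw [hres x Δh, hwhA]
  have hlower : h x - res x Δh ≤ h (x - Δh) := by
    have hsum : ∑ i, (f (y i) + f1 (y i) * (-(wh i)) + g (y i) * (-(wh i)) ^ 2 * E⁻¹) ≤ h (x - Δh) := by
      rw [hh]
      apply Finset.sum_le_sum
      intro i _
      rw [hhat_entry i]
      apply taylor_lower C hC f f1 g hd1 hd2 hgron hg0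
      rw [abs_neg]; exact hwh_i i
    refine le_trans (le_of_eq ?_) hsum
    have e0 : ∑ i, (f (y i) + f1 (y i) * (-(wh i)) + g (y i) * (-(wh i)) ^ 2 * E⁻¹)
        = (∑ i, f (y i)) + ((-1) * ∑ i, f1 (y i) * wh i + E⁻¹ * ∑ i, g (y i) * wh i ^ 2) := by
      rw [Finset.mul_sum, Finset.mul_sum, ← Finset.sum_add_distrib, ← Finset.sum_add_distrib]
      exact Finset.sum_congr rfl fun i _ => by ring
    rw [e0, hres_h, hh, ← hy]
    ring
  have hconvx : h (x - Δh) ≤ (1 - θ) * h x + θ * h xstar := by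
    have hcomb : x - Δh = (1 - θ) • x + θ • xstar := by
      funext i
      rw [hΔh]
      simp [Pi.smul_apply, smul_eq_mul]
      ring
    rw [hcomb]
    exact hconvh.2 (Set.mem_univ x) (Set.mem_univ xstar) (by linarith) hθ0.le (by ring)
  have key2 : θ * (h x - h xstar) ≤ res x Δh := by linarith
  -- COMBINE
  have hgap : 0 ≤ h x - h xstar := by linarith [hmin x]
  have h3 : κ * (θ * (h x - h xstar)) ≤ res x Δt :=
    le_trans (mul_le_mul_of_nonneg_left key2 hκ.le) (happrox Δh hwh_norm)
  have h4 : h (x - c • Δt) - h x ≤ -(c * (κ * (θ * (h x - h xstar)))) := by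
    have := mul_le_mul_of_nonneg_left h3 hc0.le
    linarith
  have h5 : c * (κ * (θ * (h x - h xstar))) = κ / (E ^ 2 * C * R) * (h x - h xstar) := by
    rw [hcdef, hθdef]
    simp only [div_eq_mul_inv, one_div, mul_inv]
    ring
  have h6 : (1 - κ / (E ^ 2 * C * R)) * (h x - h xstar)
      = (h x - h xstar) - κ / (E ^ 2 * C * R) * (h x - h xstar) := by ring
  linarith [h4, h5, h6]
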